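/- Let $\mu = (\mu_{j\bar k \alpha\bar\beta})$ (with $1 \leq j,k \leq n$, $1 \leq \alpha,\beta \leq r$) be a Griffiths semi-positive curvature tensor, i.e., $\sum_{j,k,\alpha,\beta} \mu_{j\bar k\alpha\bar\beta} v^j \bar v^k \xi^\alpha \bar\xi^\beta \geq 0$ for all $v \in \mathbb{C}^n$, $\xi \in \mathbb{C}^r$. If the trace over bundle indices vanishes, $\sum_\alpha \mu_{j\bar k\alpha\bar\alpha} = 0$ for all $j,k$, then $\mu_{j\bar k\alpha\bar\beta} = 0$ for all $j,k,\alpha,\beta$. -/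
import Mathlib

/- STATEMENT 11: A Griffiths semi-positive hermitian curvature tensor
`μ = (μ_{j k̄ α β̄})` whose trace over the bundle indices vanishes is zero. -/

open Complex

lemma single_eval' {m : ℕ} (B : Fin m → Fin m → ℂ) (j0 k0 : Fin m) (a b : ℂ) :
    ∑ j, ∑ k, B j k * (Pi.single j0 a : Fin m → ℂ) j
        * starRingEnd ℂ ((Pi.single k0 b : Fin m → ℂ) k)
      = B j0 k0 * a * starRingEnd ℂ b := by
  simp [Pi.single_apply, apply_ite (starRingEnd ℂ), mul_ite, ite_mul, Finset.sum_ite_eq']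

lemma expand_pair' {m : ℕ} (B : Fin m → Fin m → ℂ) (j0 k0 : Fin m) (a b : ℂ) :
    ∑ j, ∑ k, B j k * ((Pi.single j0 a : Fin m → ℂ) + (Pi.single k0 b : Fin m → ℂ)) j
        * starRingEnd ℂ (((Pi.single j0 a : Fin m → ℂ) + (Pi.single k0 b : Fin m → ℂ)) k)
      = B j0 j0 * a * starRingEnd ℂ a + B j0 k0 * a * starRingEnd ℂ b
        + B k0 j0 * b * starRingEnd ℂ a + B k0 k0 * b * starRingEnd ℂ b := by
  have h : ∀ j k, B j k * ((Pi.single j0 a : Fin m → ℂ) + (Pi.single k0 b : Fin m → ℂ)) j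
        * starRingEnd ℂ (((Pi.single j0 a : Fin m → ℂ) + (Pi.single k0 b : Fin m → ℂ)) k)
      = B j k * (Pi.single j0 a : Fin m → ℂ) j * starRingEnd ℂ ((Pi.single j0 a : Fin m → ℂ) k)
      + B j k * (Pi.single j0 a : Fin m → ℂ) j * starRingEnd ℂ ((Pi.single k0 b : Fin m → ℂ) k)
      + B j k * (Pi.single k0 b : Fin m → ℂ) j * starRingEnd ℂ ((Pi.single j0 a : Fin m → ℂ) k)
      + B j k * (Pi.single k0 b : Fin m → ℂ) j
          * starRingEnd ℂ ((Pi.single k0 b : Fin m → ℂ) k) := by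
    intro j k
    simp only [Pi.add_apply, map_add]
    ring
  simp only [h, Finset.sum_add_distrib, single_eval']

/-- A sesquilinear form vanishing on the diagonal vanishes. -/
lemma sesq_zero' {m : ℕ} (B : Fin m → Fin m → ℂ)
    (h : ∀ v : Fin m → ℂ, ∑ j, ∑ k, B j k * v j * starRingEnd ℂ (v k) = 0) :
    ∀ j k, B j k = 0 := by
  have hd : ∀ j, B j j = 0 := by
    intro j
    have := h ((Pi.single j (1:ℂ)) + (Pi.single j (0:ℂ)))
    rw [expand_pair'] at this
    simpa using this
  intro j k
  have h1 := h ((Pi.single j (1:ℂ)) + (Pi.single k (1:ℂ)))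
  have h2 := h ((Pi.single j (1:ℂ)) + (Pi.single k Complex.I))
  rw [expand_pair'] at h1 h2
  simp only [hd, map_one, mul_one, one_mul, zero_mul, zero_add, add_zero, mul_zero,
    Complex.conj_I] at h1 h2
  linear_combination h1/2 + Complex.I*h2/2 + (B j k - B k j)/2 * Complex.I_sq

lemma sum4_comm' {n r : ℕ} (f : Fin n → Fin n → Fin r → Fin r → ℂ) :
    ∑ j, ∑ k, ∑ α, ∑ β, f j k α β = ∑ α, ∑ β, ∑ j, ∑ k, f j k α β :=
  calc ∑ j, ∑ k, ∑ α, ∑ β, f j k α β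
      = ∑ j, ∑ α, ∑ k, ∑ β, f j k α β :=
        Finset.sum_congr rfl fun _ _ => Finset.sum_comm ..
    _ = ∑ α, ∑ j, ∑ k, ∑ β, f j k α β := Finset.sum_comm ..
    _ = ∑ α, ∑ j, ∑ β, ∑ k, f j k α β :=
        Finset.sum_congr rfl fun _ _ => Finset.sum_congr rfl fun _ _ => Finset.sum_comm ..
    _ = ∑ α, ∑ β, ∑ j, ∑ k, f j k α β :=
        Finset.sum_congr rfl fun _ _ => Finset.sum_comm ..

lemma sum3_comm' {n r : ℕ} (g : Fin r → Fin n → Fin n → ℂ) :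
    ∑ γ, ∑ j, ∑ k, g γ j k = ∑ j, ∑ k, ∑ γ, g γ j k :=
  calc ∑ γ, ∑ j, ∑ k, g γ j k
      = ∑ j, ∑ γ, ∑ k, g γ j k := Finset.sum_comm ..
    _ = ∑ j, ∑ k, ∑ γ, g γ j k :=
        Finset.sum_congr rfl fun _ _ => Finset.sum_comm ..

lemma key_vanish (n r : ℕ) (μ : Fin n → Fin n → Fin r → Fin r → ℂ)
    (hherm : ∀ j k α β, μ j k α β = starRingEnd ℂ (μ k j β α))
    (hpos : ∀ (v : Fin n → ℂ) (ξ : Fin r → ℂ),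
      0 ≤ (∑ j, ∑ k, ∑ α, ∑ β,
        μ j k α β * v j * starRingEnd ℂ (v k) * ξ α * starRingEnd ℂ (ξ β)).re)
    (htrace : ∀ j k, ∑ α, μ j k α α = 0) :
    ∀ (v : Fin n → ℂ) (α β : Fin r),
      ∑ j, ∑ k, μ j k α β * v j * starRingEnd ℂ (v k) = 0 := by
  intro v α β
  set A : Fin r → Fin r → ℂ :=
    fun γ δ => ∑ j, ∑ k, μ j k γ δ * v j * starRingEnd ℂ (v k) with hA
  have hAherm : ∀ γ δ, A δ γ = starRingEnd ℂ (A γ δ) := by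
    intro γ δ
    calc A δ γ = ∑ j, ∑ k, starRingEnd ℂ (μ k j γ δ * v k * starRingEnd ℂ (v j)) := by
          rw [hA]
          refine Finset.sum_congr rfl fun j _ => Finset.sum_congr rfl fun k _ => ?_
          rw [hherm j k δ γ]
          simp only [map_mul, Complex.conj_conj]
          ring
      _ = starRingEnd ℂ (∑ j, ∑ k, μ k j γ δ * v k * starRingEnd ℂ (v j)) := by
          simp [map_sum]
      _ = starRingEnd ℂ (A γ δ) := by rw [hA, Finset.sum_comm]
  have hApos : ∀ ξ : Fin r → ℂ,
      0 ≤ (∑ γ, ∑ δ, A γ δ * ξ γ * starRingEnd ℂ (ξ δ)).re := by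
    intro ξ
    have hre : (∑ γ, ∑ δ, A γ δ * ξ γ * starRingEnd ℂ (ξ δ))
        = ∑ j, ∑ k, ∑ γ, ∑ δ,
            μ j k γ δ * v j * starRingEnd ℂ (v k) * ξ γ * starRingEnd ℂ (ξ δ) := by
      rw [sum4_comm']
      refine Finset.sum_congr rfl fun γ _ => Finset.sum_congr rfl fun δ _ => ?_
      rw [hA]
      simp only [Finset.sum_mul]
    rw [hre]
    exact hpos v ξ
  have hAtr : ∑ γ, A γ γ = 0 := by
    rw [hA]
    rw [sum3_comm' (fun γ j k => μ j k γ γ * v j * starRingEnd ℂ (v k))]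
    refine Finset.sum_eq_zero fun j _ => Finset.sum_eq_zero fun k _ => ?_
    calc ∑ γ, μ j k γ γ * v j * starRingEnd ℂ (v k)
        = (∑ γ, μ j k γ γ) * v j * starRingEnd ℂ (v k) := by
          simp [Finset.sum_mul]
      _ = 0 := by rw [htrace]; ring
  -- diagonal entries have nonnegative real part
  have hdiag_re : ∀ γ, 0 ≤ (A γ γ).re := by
    intro γ
    have h0 := hApos ((Pi.single γ (1:ℂ)) + (Pi.single γ (0:ℂ)))
    rw [expand_pair'] at h0
    simpa using h0
  have hsumre : ∑ γ, (A γ γ).re = 0 := by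
    have := congrArg Complex.re hAtr
    simpa [Complex.re_sum] using this
  have hdiag : ∀ γ, A γ γ = 0 := by
    intro γ
    have hre0 : (A γ γ).re = 0 :=
      (Finset.sum_eq_zero_iff_of_nonneg (fun γ _ => hdiag_re γ)).mp hsumre γ (Finset.mem_univ γ)
    have him : (A γ γ).im = 0 := by
      have h := congrArg Complex.im (hAherm γ γ)
      simp only [Complex.conj_im] at h
      linarith
    exact Complex.ext hre0 him
  -- off-diagonal entries vanish
  have h0 := hApos ((Pi.single α (1:ℂ)) + (Pi.single β (-(A α β))))
  rw [expand_pair'] at h0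
  rw [hdiag α, hdiag β, hAherm α β] at h0
  simp only [zero_mul, map_one, mul_one, one_mul, add_zero, zero_add, map_neg, mul_neg,
    neg_mul, neg_neg, neg_zero, mul_zero, zero_add, add_zero] at h0
  have hns : Complex.normSq (A α β) = 0 := by
    have hre : (-(A α β * starRingEnd ℂ (A α β))
        + -(starRingEnd ℂ (A α β) * A α β)).re = -2 * Complex.normSq (A α β) := by
      rw [Complex.mul_conj, mul_comm (starRingEnd ℂ (A α β)) (A α β), Complex.mul_conj]
      simp
      ring
    nlinarith [h0, Complex.normSq_nonneg (A α β)]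
  exact Complex.normSq_eq_zero.mp hns

theorem stmt_11 (n r : ℕ) (μ : Fin n → Fin n → Fin r → Fin r → ℂ)
    (hherm : ∀ j k α β, μ j k α β = starRingEnd ℂ (μ k j β α))
    (hpos : ∀ (v : Fin n → ℂ) (ξ : Fin r → ℂ),
      0 ≤ (∑ j, ∑ k, ∑ α, ∑ β,
        μ j k α β * v j * starRingEnd ℂ (v k) * ξ α * starRingEnd ℂ (ξ β)).re)
    (htrace : ∀ j k, ∑ α, μ j k α α = 0) :
    μ = 0 := by
  funext j k α β
  exact sesq_zero' (fun j k => μ j k α β)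
    (fun v => key_vanish n r μ hherm hpos htrace v α β) j k
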